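/- Let I be a finite nonempty index set, X a real |I|×d matrix, and n ∈ ℝ^I with n(i) ≥ 0 for all i. If m̂ ∈ ℝ^I satisfies m̂(i) > 0 for all i, log m̂ lies in the column space of X, and l(m̂) ≥ l(m) for every m ∈ ℝ^I with m(i) > 0 for all i and log m in the column space of X, then m̂ matches the sufficient statistic: Xᵀm̂ = Xᵀn. -/

import Mathlib

/-- A maximizer of the log-likelihood over the model matches the
sufficient statistic: `Xᵀ m̂ = Xᵀ n`. -/
theorem mle_matches_sufficient_statistic {I : Type*} [Fintype I] [Nonempty I] {d : ℕ}
    (X : Matrix I (Fin d) ℝ) (n : I → ℝ) (hn : ∀ i, 0 ≤ n i)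
    (mhat : I → ℝ) (hpos : ∀ i, 0 < mhat i)
    (hmodel : ∃ θ : Fin d → ℝ, (fun i => Real.log (mhat i)) = X.mulVec θ)
    (hmax : ∀ m : I → ℝ, (∀ i, 0 < m i) →
      (∃ θ : Fin d → ℝ, (fun i => Real.log (m i)) = X.mulVec θ) →
      (∑ i, n i * Real.log (m i) - ∑ i, m i) ≤
        (∑ i, n i * Real.log (mhat i) - ∑ i, mhat i)) :
    X.transpose.mulVec mhat = X.transpose.mulVec n := by
  obtain ⟨θ, hθ⟩ := hmodel
  funext j
  set v : I → ℝ := fun i => X i j with hv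
  set f : ℝ → ℝ := fun t =>
    ∑ i, n i * (Real.log (mhat i) + t * v i) - ∑ i, mhat i * Real.exp (t * v i) with hfdef
  have hf0 : f 0 = ∑ i, n i * Real.log (mhat i) - ∑ i, mhat i := by
    simp [hfdef]
  have hfle : ∀ t, f t ≤ f 0 := by
    intro t
    have hmpos : ∀ i, 0 < mhat i * Real.exp (t * v i) := fun i =>
      mul_pos (hpos i) (Real.exp_pos _)
    have hlog : ∀ i, Real.log (mhat i * Real.exp (t * v i)) =
        Real.log (mhat i) + t * v i := by
      intro i
      rw [Real.log_mul (ne_of_gt (hpos i)) (ne_of_gt (Real.exp_pos _)), Real.log_exp]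
    have hmem : ∃ θ' : Fin d → ℝ,
        (fun i => Real.log (mhat i * Real.exp (t * v i))) = X.mulVec θ' := by
      refine ⟨θ + t • (Pi.single j 1 : Fin d → ℝ), ?_⟩
      funext i
      rw [hlog, Matrix.mulVec_add, Matrix.mulVec_smul]
      have h1 : X.mulVec θ i = Real.log (mhat i) := (congrFun hθ i).symm
      have h2 : X.mulVec (Pi.single j 1) i = v i := by
        simp [Matrix.mulVec_single, hv]
      simp [Pi.add_apply, h1, h2, hv]
    have := hmax _ hmpos hmem
    rw [hf0]
    calc f t = ∑ i, n i * Real.log (mhat i * Real.exp (t * v i))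
            - ∑ i, mhat i * Real.exp (t * v i) := by
          simp only [hfdef, hlog]
      _ ≤ _ := this
  have hmax0 : IsLocalMax f 0 := Filter.Eventually.of_forall hfle
  have hderiv : HasDerivAt f (∑ i, n i * v i - ∑ i, mhat i * v i) 0 := by
    have h1 : HasDerivAt (fun t => ∑ i, n i * (Real.log (mhat i) + t * v i))
        (∑ i, n i * v i) 0 := by
      apply HasDerivAt.fun_sum
      intro i _
      have := (((hasDerivAt_id (0:ℝ)).mul_const (v i)).const_add (Real.log (mhat i))).const_mul (n i)
      simpa using this
    have h2 : HasDerivAt (fun t => ∑ i, mhat i * Real.exp (t * v i))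
        (∑ i, mhat i * v i) 0 := by
      apply HasDerivAt.fun_sum
      intro i _
      have := (((hasDerivAt_id (0:ℝ)).mul_const (v i)).exp).const_mul (mhat i)
      simpa using this
    exact h1.sub h2
  have hzero : (∑ i, n i * v i) - ∑ i, mhat i * v i = 0 := by
    rw [← hderiv.deriv]
    exact hmax0.deriv_eq_zero
  have key : ∑ i, mhat i * v i = ∑ i, n i * v i := by linarith
  simp only [Matrix.mulVec, dotProduct, Matrix.transpose_apply]
  calc ∑ i, X i j * mhat i = ∑ i, mhat i * v i := by
        simp [hv, mul_comm]
    _ = ∑ i, n i * v i := key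
    _ = ∑ i, X i j * n i := by simp [hv, mul_comm]
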